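/- Let α ≠ 0 and define Z_t = (S_t/X_t)^α where X_t = x·exp((r−δ−σ²/2)t + σB_t) and S_t = max(s, max_{0≤u≤t} X_u), with x = s. If α < 0 then 0 < Z_t ≤ 1 for all t ≥ 0, Z_t = 1 exactly when X_t = S_t, and by Itô's formula dZ_t = −ασ(S_t/X_t)^α dB_t + α dS_t/S_t; in particular Z is a supermartingale (since α < 0 and S is nondecreasing, the drift term α dS_t/S_t is nonpositive). -/

import Mathlib

open MeasureTheory ProbabilityTheory
open scoped NNReal ENNReal

lemma pdf_shift (v : ℝ≥0) (hv : v ≠ 0) (k y : ℝ) :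
    gaussianPDFReal 0 v y * Real.exp (k * y)
      = Real.exp (k^2 * v / 2) * gaussianPDFReal (k * v) v y := by
  have hv' : (v:ℝ) ≠ 0 := by exact_mod_cast hv
  unfold gaussianPDFReal
  rw [mul_assoc, ← Real.exp_add, mul_left_comm (Real.exp (k^2 * v / 2)), ← Real.exp_add]
  congr 1
  field_simp
  ring

lemma gauss_mgf (v : ℝ≥0) (k : ℝ) :
    Integrable (fun y => Real.exp (k * y)) (gaussianReal 0 v) ∧
      ∫ y, Real.exp (k * y) ∂(gaussianReal 0 v) = Real.exp (k^2 * v / 2) := by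
  have hm : Measurable fun y : ℝ => Real.exp (k * y) :=
    (Real.continuous_exp.comp (continuous_const.mul continuous_id)).measurable
  by_cases hv : v = 0
  · subst hv
    rw [gaussianReal_zero_var]
    refine ⟨⟨hm.aestronglyMeasurable, ?_⟩, ?_⟩
    · rw [HasFiniteIntegral, lintegral_dirac]
      exact ENNReal.coe_lt_top
    · rw [integral_dirac]
      simp
  · rw [gaussianReal_of_var_ne_zero _ hv]
    have hpdf : gaussianPDF 0 v
        = fun y => ((Real.toNNReal (gaussianPDFReal 0 v y) : ℝ≥0) : ℝ≥0∞) := rfl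
    have hmeas : Measurable fun y => Real.toNNReal (gaussianPDFReal 0 v y) :=
      (measurable_gaussianPDFReal 0 v).real_toNNReal
    have key : (fun y => Real.toNNReal (gaussianPDFReal 0 v y) • Real.exp (k * y))
        = fun y => Real.exp (k^2 * v / 2) * gaussianPDFReal (k * v) v y := by
      funext y
      rw [NNReal.smul_def, smul_eq_mul,
        Real.coe_toNNReal _ (gaussianPDFReal_nonneg 0 v y), pdf_shift v hv]
    constructor
    · rw [hpdf, integrable_withDensity_iff_integrable_smul hmeas, key]
      exact (integrable_gaussianPDFReal (k * v) v).const_mul _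
    · rw [hpdf, integral_withDensity_eq_integral_smul hmeas, key]
      rw [integral_const_mul, integral_gaussianPDFReal_eq_one _ hv, mul_one]

lemma exp_map_gauss {Ω : Type*} [MeasurableSpace Ω] (μ : Measure Ω) (D : Ω → ℝ)
    (hD : Measurable D) (v : ℝ≥0) (hlaw : Measure.map D μ = gaussianReal 0 v) (k : ℝ) :
    Integrable (fun ω => Real.exp (k * D ω)) μ ∧
      ∫ ω, Real.exp (k * D ω) ∂μ = Real.exp (k^2 * v / 2) := by
  have hm : Measurable fun y : ℝ => Real.exp (k * y) :=
    (Real.continuous_exp.comp (continuous_const.mul continuous_id)).measurable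
  constructor
  · have h1 : Integrable (fun y => Real.exp (k * y)) (Measure.map D μ) := by
      rw [hlaw]; exact (gauss_mgf v k).1
    exact (integrable_map_measure hm.aestronglyMeasurable hD.aemeasurable).mp h1
  · rw [← (gauss_mgf v k).2, ← hlaw, integral_map hD.aemeasurable hm.aestronglyMeasurable]

lemma csSup_image_Icc_eq_iSup (g : ℝ → ℝ) (hg : Continuous g) {t : ℝ} (ht : 0 ≤ t) :
    sSup (g '' Set.Icc 0 t) = ⨆ q : ℚ, g (max 0 (min (q : ℝ) t)) := by
  set c : ℚ → ℝ := fun q => max 0 (min (q : ℝ) t) with hc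
  have hcmem : ∀ q, c q ∈ Set.Icc 0 t := fun q =>
    ⟨le_max_left _ _, max_le ht (min_le_right _ _)⟩
  have hA : BddAbove (g '' Set.Icc 0 t) := (isCompact_Icc.image hg).bddAbove
  have hrange : Set.range (fun q => g (c q)) ⊆ g '' Set.Icc 0 t := by
    rintro _ ⟨q, rfl⟩; exact Set.mem_image_of_mem g (hcmem q)
  have hbr : BddAbove (Set.range fun q => g (c q)) := hA.mono hrange
  apply le_antisymm
  · refine csSup_le ((Set.nonempty_Icc.mpr ht).image g) ?_
    rintro _ ⟨u, hu, rfl⟩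
    have hcont : ContinuousAt (fun v : ℝ => g (max 0 (min v t))) u :=
      (hg.comp ((continuous_const.max (continuous_id.min continuous_const)))).continuousAt
    have humem : u ∈ closure (Set.range ((↑) : ℚ → ℝ)) := by
      rw [(Rat.denseRange_cast (𝕜 := ℝ)).closure_eq]; trivial
    obtain ⟨xs, hxs_mem, hxs_lim⟩ := mem_closure_iff_seq_limit.mp humem
    choose qs hqs using hxs_mem
    have hqs_lim : Filter.Tendsto (fun n => (qs n : ℝ)) Filter.atTop (nhds u) := by
      have h0 : (fun n => (qs n : ℝ)) = xs := funext fun n => hqs n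
      rw [h0]; exact hxs_lim
    have hlim : Filter.Tendsto (fun n => g (c (qs n))) Filter.atTop (nhds (g u)) := by
      have hcu : max 0 (min u t) = u := by
        rw [min_eq_left hu.2, max_eq_right hu.1]
      have h2 := hcont.tendsto.comp hqs_lim
      rw [hcu] at h2
      exact h2
    exact le_of_tendsto hlim (Filter.Eventually.of_forall fun n => le_ciSup hbr (qs n))
  · exact ciSup_le fun q => le_csSup hA (Set.mem_image_of_mem g (hcmem q))

/-- A standard one-dimensional Brownian motion started at `0`: continuous paths, Gaussian
increments with variance `t − s`, and independent increments. -/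
def IsStandardBM {Ω : Type*} [MeasurableSpace Ω] (μ : Measure Ω) (B : ℝ → Ω → ℝ) : Prop :=
  (∀ ω, B 0 ω = 0) ∧
  (∀ ω, Continuous fun t => B t ω) ∧
  (∀ t : ℝ, Measurable (B t)) ∧
  (∀ s t : ℝ, 0 ≤ s → s ≤ t →
    Measure.map (fun ω => B t ω - B s ω) μ = gaussianReal 0 (Real.toNNReal (t - s))) ∧
  (∀ t : ℕ → ℝ, Monotone t → 0 ≤ t 0 →
    iIndepFun (fun i ω => B (t (i + 1)) ω - B (t i) ω) μ)

/-- for `α < 0` the Azéma-type process `Z_t = (S_t/X_t)^α` (with `X` geometric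
Brownian motion started at `x` and `S` its running maximum started at `s = x`) satisfies
`0 < Z_t ≤ 1`, `Z_t = 1` exactly when `X_t = S_t`, and `Z` is a supermartingale with respect
to any filtration `ℱ` to which the driving Brownian motion `B` is adapted and with respect to
which `B` has independent future increments (here encoded by adaptedness of `B` to `ℱ`);
the drift term `α dS_t/S_t` coming from Itô's formula is nonpositive. -/
theorem azema_supermartingale {Ω : Type*} {mΩ : MeasurableSpace Ω} (μ : Measure Ω)
    [IsProbabilityMeasure μ] (B : ℝ → Ω → ℝ) (hB : IsStandardBM μ B)
    (r δ σ x α : ℝ) (hr : 0 < r) (hδ : 0 < δ) (hσ : 0 < σ) (hx : 0 < x)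
    (hα : α = 2 * (r - δ) / σ ^ 2 - 1) (hαneg : α < 0)
    (X : ℝ → Ω → ℝ)
    (hX : ∀ t ω, X t ω = x * Real.exp ((r - δ - σ ^ 2 / 2) * t + σ * B t ω))
    (S : NNReal → Ω → ℝ)
    (hS : ∀ t ω, S t ω = sSup ((fun u => X u ω) '' Set.Icc (0 : ℝ) (t : ℝ)))
    (Z : NNReal → Ω → ℝ)
    (hZ : ∀ t ω, Z t ω = (S t ω / X (t : ℝ) ω) ^ α)
    (ℱ : Filtration NNReal mΩ)
    (hadapted : Adapted ℱ fun t : NNReal => B (t : ℝ))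
    (hindep : ∀ s t : NNReal, s ≤ t →
      Indep (MeasurableSpace.comap (fun ω => B (t : ℝ) ω - B (s : ℝ) ω) inferInstance)
        (ℱ s) μ) :
    (∀ (t : NNReal) (ω : Ω), 0 < Z t ω ∧ Z t ω ≤ 1) ∧
      (∀ (t : NNReal) (ω : Ω), Z t ω = 1 ↔ X (t : ℝ) ω = S t ω) ∧
      Supermartingale Z ℱ μ := by
  obtain ⟨hB0, hBcont, hBmeas, hBlaw, -⟩ := hB
  have hσ2 : (0:ℝ) < σ ^ 2 := by positivity
  have hc : r - δ - σ ^ 2 / 2 = α * σ ^ 2 / 2 := by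
    rw [hα]; field_simp
  have hXpos : ∀ (u : ℝ) (ω : Ω), 0 < X u ω := fun u ω => by
    rw [hX]; positivity
  have hXcont : ∀ ω, Continuous fun u => X u ω := by
    intro ω
    have h0 : (fun u => X u ω)
        = fun u => x * Real.exp ((r - δ - σ ^ 2 / 2) * u + σ * B u ω) :=
      funext fun u => hX u ω
    rw [h0]
    exact continuous_const.mul (Real.continuous_exp.comp
      ((continuous_const.mul continuous_id).add (continuous_const.mul (hBcont ω))))
  have hSbdd : ∀ (t : NNReal) (ω : Ω), BddAbove ((fun u => X u ω) '' Set.Icc 0 (t:ℝ)) :=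
    fun t ω => (isCompact_Icc.image (hXcont ω)).bddAbove
  have hXleS : ∀ (t : NNReal) (u : ℝ), u ∈ Set.Icc (0:ℝ) (t:ℝ) → ∀ ω, X u ω ≤ S t ω := by
    intro t u hu ω
    rw [hS]
    exact le_csSup (hSbdd t ω) (Set.mem_image_of_mem _ hu)
  have hSX : ∀ (t : NNReal) (ω : Ω), X (t:ℝ) ω ≤ S t ω := fun t ω =>
    hXleS t (t:ℝ) ⟨t.coe_nonneg, le_refl _⟩ ω
  have hSpos : ∀ (t : NNReal) (ω : Ω), 0 < S t ω := fun t ω =>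
    lt_of_lt_of_le (hXpos _ ω) (hSX t ω)
  have hSmono : ∀ (i j : NNReal), i ≤ j → ∀ ω, S i ω ≤ S j ω := by
    intro a b hab ω
    rw [hS, hS]
    refine csSup_le_csSup (hSbdd b ω) ((Set.nonempty_Icc.mpr a.coe_nonneg).image _) ?_
    exact Set.image_mono (Set.Icc_subset_Icc_right (NNReal.coe_le_coe.mpr hab))
  have hratio : ∀ (t : NNReal) (ω : Ω), 1 ≤ S t ω / X (t:ℝ) ω := fun t ω =>
    (one_le_div (hXpos _ ω)).mpr (hSX t ω)
  have part1 : ∀ (t : NNReal) (ω : Ω), 0 < Z t ω ∧ Z t ω ≤ 1 := by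
    intro t ω
    rw [hZ]
    exact ⟨Real.rpow_pos_of_pos (div_pos (hSpos t ω) (hXpos _ ω)) α,
      Real.rpow_le_one_of_one_le_of_nonpos (hratio t ω) hαneg.le⟩
  refine ⟨part1, ?_, ?_⟩
  · intro t ω
    rw [hZ]
    constructor
    · intro h
      have hpos : 0 < S t ω / X (t:ℝ) ω := div_pos (hSpos t ω) (hXpos _ ω)
      rw [Real.rpow_def_of_pos hpos, Real.exp_eq_one_iff, mul_eq_zero] at h
      rcases h with h | h
      · rcases Real.log_eq_zero.mp h with h1 | h1 | h1
        · exact absurd h1 (ne_of_gt hpos)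
        · exact ((div_eq_one_iff_eq (ne_of_gt (hXpos _ ω))).mp h1).symm
        · linarith
      · exact absurd h (ne_of_lt hαneg)
    · intro h
      rw [← h, div_self (ne_of_gt (hXpos _ ω)), Real.one_rpow]
  · -- supermartingale
    have hBm : ∀ (t : NNReal) (u : ℝ), 0 ≤ u → u ≤ (t:ℝ) → Measurable[ℱ t] (B u) := by
      intro t u hu hut
      have h1 : Measurable[ℱ u.toNNReal] (B (u.toNNReal : ℝ)) := hadapted u.toNNReal
      have hco : ((u.toNNReal : NNReal) : ℝ) = u := Real.coe_toNNReal u hu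
      have hle : u.toNNReal ≤ t := by
        rw [← NNReal.coe_le_coe, hco]; exact hut
      simp only [hco] at h1
      exact h1.mono (ℱ.mono hle) le_rfl
    have hXm : ∀ (t : NNReal) (u : ℝ), 0 ≤ u → u ≤ (t:ℝ) → Measurable[ℱ t] (X u) := by
      intro t u hu hut
      have h0 : X u = fun ω => x * Real.exp ((r - δ - σ ^ 2 / 2) * u + σ * B u ω) :=
        funext fun ω => hX u ω
      rw [h0]
      exact measurable_const.mul (Real.measurable_exp.comp
        (measurable_const.add ((hBm t u hu hut).const_mul σ)))
    have hSm : ∀ t : NNReal, Measurable[ℱ t] (S t) := by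
      intro t
      have hrw : S t = fun ω => ⨆ q : ℚ, X (max 0 (min (q:ℝ) (t:ℝ))) ω := by
        funext ω
        rw [hS, csSup_image_Icc_eq_iSup _ (hXcont ω) t.coe_nonneg]
      rw [hrw]
      exact Measurable.iSup fun q =>
        hXm t _ (le_max_left _ _) (max_le t.coe_nonneg (min_le_right _ _))
    have hZm : ∀ t : NNReal, Measurable[ℱ t] (Z t) := by
      intro t
      have h0 : Z t = fun ω => Real.exp (Real.log (S t ω / X (t:ℝ) ω) * α) := by
        funext ω
        rw [hZ, Real.rpow_def_of_pos (div_pos (hSpos t ω) (hXpos _ ω))]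
      rw [h0]
      exact Real.measurable_exp.comp ((Real.measurable_log.comp
        ((hSm t).div (hXm t (t:ℝ) t.coe_nonneg le_rfl))).mul_const α)
    have hZint : ∀ t : NNReal, Integrable (Z t) μ := by
      intro t
      refine (integrable_const (1:ℝ)).mono'
        (((hZm t).mono (ℱ.le t) le_rfl).aestronglyMeasurable) ?_
      refine Filter.Eventually.of_forall fun ω => ?_
      rw [Real.norm_eq_abs, abs_of_pos (part1 t ω).1]
      exact (part1 t ω).2
    refine ⟨fun t => (hZm t).stronglyMeasurable, ?_, hZint⟩
    intro i j hij
    set v : ℝ := (j:ℝ) - (i:ℝ) with hv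
    have hv0 : 0 ≤ v := sub_nonneg.mpr (NNReal.coe_le_coe.mpr hij)
    set D : Ω → ℝ := fun ω => B (j:ℝ) ω - B (i:ℝ) ω with hD
    have hDmeas : Measurable D := (hBmeas (j:ℝ)).sub (hBmeas (i:ℝ))
    have hlaw : Measure.map D μ = gaussianReal 0 (Real.toNNReal v) :=
      hBlaw (i:ℝ) (j:ℝ) i.coe_nonneg (NNReal.coe_le_coe.mpr hij)
    set g : Ω → ℝ := fun ω =>
      Real.exp (-(α * ((r - δ - σ ^ 2 / 2) * v)) + -(α * σ) * D ω) with hg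
    have hEG := exp_map_gauss μ D hDmeas _ hlaw (-(α * σ))
    have hgsplit : g = fun ω =>
        Real.exp (-(α * ((r - δ - σ ^ 2 / 2) * v))) * Real.exp (-(α * σ) * D ω) :=
      funext fun ω => Real.exp_add _ _
    have hgInt : Integrable g μ := by
      rw [hgsplit]; exact hEG.1.const_mul _
    have hvcoe : ((Real.toNNReal v : NNReal) : ℝ) = v := Real.coe_toNNReal v hv0
    have hgint : ∫ ω, g ω ∂μ = 1 := by
      rw [hgsplit, integral_const_mul, hEG.2, hvcoe, ← Real.exp_add, ← Real.exp_zero]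
      congr 1
      rw [hc]
      ring
    have hXj : ∀ ω, X (j:ℝ) ω
        = X (i:ℝ) ω * Real.exp ((r - δ - σ ^ 2 / 2) * v + σ * D ω) := by
      intro ω
      rw [hX, hX, mul_assoc, ← Real.exp_add]
      congr 1
      rw [hv, hD]
      ring
    have hZig : ∀ ω, Z i ω * g ω = (S i ω / X (j:ℝ) ω) ^ α := by
      intro ω
      have hXi := hXpos (i:ℝ) ω
      have hXjp := hXpos (j:ℝ) ω
      have hSi := hSpos i ω
      have hlog : Real.log (S i ω / X (j:ℝ) ω)
          = Real.log (S i ω / X (i:ℝ) ω) - ((r - δ - σ ^ 2 / 2) * v + σ * D ω) := by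
        rw [hXj ω, div_mul_eq_div_div,
          Real.log_div (ne_of_gt (div_pos hSi hXi)) (Real.exp_ne_zero _), Real.log_exp]
      rw [hZ, hg]
      simp only
      rw [Real.rpow_def_of_pos (div_pos hSi hXi),
        Real.rpow_def_of_pos (div_pos hSi hXjp), hlog, ← Real.exp_add]
      congr 1
      ring
    have hW2 : ∀ ω, Z j ω ≤ Z i ω * g ω := by
      intro ω
      rw [hZig ω, hZ]
      refine Real.rpow_le_rpow_of_nonpos (div_pos (hSpos i ω) (hXpos _ ω)) ?_ hαneg.le
      exact (div_le_div_iff_of_pos_right (hXpos _ ω)).mpr (hSmono i j hij ω)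
    have hWint : Integrable (fun ω => Z i ω * g ω) μ := by
      refine Integrable.bdd_mul (c := 1) hgInt
        (((hZm i).mono (ℱ.le i) le_rfl).aestronglyMeasurable) (Filter.Eventually.of_forall fun ω => ?_)
      rw [Real.norm_eq_abs, abs_of_pos (part1 i ω).1]
      exact (part1 i ω).2
    have hm1 : MeasurableSpace.comap D inferInstance ≤ mΩ := hDmeas.comap_le
    have hgsm : StronglyMeasurable[MeasurableSpace.comap D inferInstance] g := by
      have hDm1 : Measurable[MeasurableSpace.comap D inferInstance] D :=
        Measurable.of_comap_le le_rfl
      have hφ : Measurable fun y : ℝ =>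
          Real.exp (-(α * ((r - δ - σ ^ 2 / 2) * v)) + -(α * σ) * y) :=
        (Real.continuous_exp.comp
          (continuous_const.add (continuous_const.mul continuous_id))).measurable
      exact (hφ.comp hDm1).stronglyMeasurable
    have step3 : μ[g|ℱ i] =ᵐ[μ] fun _ => ∫ ω, g ω ∂μ :=
      condExp_indep_eq hm1 (ℱ.le i) hgsm (hindep i j hij)
    have step2 : μ[fun ω => Z i ω * g ω|ℱ i] =ᵐ[μ] fun ω => Z i ω * (μ[g|ℱ i]) ω := by
      exact condExp_mul_of_stronglyMeasurable_left ((hZm i).stronglyMeasurable)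
        (f := Z i) (g := g) (by exact hWint) hgInt
    have step1 : μ[Z j|ℱ i] ≤ᵐ[μ] μ[fun ω => Z i ω * g ω|ℱ i] :=
      condExp_mono (hZint j) hWint (Filter.Eventually.of_forall hW2)
    filter_upwards [step1, step2, step3] with ω h1 h2 h3
    refine le_trans h1 (le_of_eq ?_)
    rw [h2, h3, hgint, mul_one]
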